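/- arXiv:2509.04187 — 4 statements merged into one kernel-verified Lean document; each statement's English description precedes it below -/
import Mathlib

section
/- Let k be a positive even integer and let f be a cusp form of weight k for the full modular group SL₂(ℤ). Then for every complex number s, the integrals ∫_0^∞ f(iy) · y^{s+(k−1)/2−1} dy and ∫_1^∞ f(iy) · ((−1)^{k/2} y^{(k−1)/2−s} + y^{s+(k−3)/2}) dy both converge and are equal. -/
open Complex UpperHalfPlane

/-- The restriction of a function on the upper half-plane to the positive imaginary
axis: `atI f y = f(iy)` for `y > 0` (junk value `0` otherwise). -/
noncomputable def atI (f : ℍ → ℂ) (y : ℝ) : ℂ :=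
  if h : 0 < y then f ⟨Complex.I * y, by simpa using h⟩ else 0

open MeasureTheory Set Filter Asymptotics in
theorem cuspForm_aux_cont (k : ℕ)
    (f : CuspForm (⊤ : Subgroup (Matrix.SpecialLinearGroup (Fin 2) ℤ)) (k : ℤ)) :
    ContinuousOn (atI ⇑f) (Ioi 0) := by
  have h1 : ∀ z : ℂ, 0 < z.im → ContinuousAt (⇑f ∘ ofComplex) z := fun z hz =>
    (mdifferentiableAt_iff_differentiableAt.mp
      ((f.holo' _).comp z (mdifferentiableAt_ofComplex hz))).continuousAt
  have h2 : ContinuousOn (fun y : ℝ => (⇑f ∘ ofComplex) (Complex.I * y)) (Ioi 0) := by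
    intro y hy
    exact ((h1 _ (by simpa using hy)).comp
      ((continuous_const.mul continuous_ofReal).continuousAt)).continuousWithinAt
  refine h2.congr fun y hy => ?_
  simp only [atI, dif_pos (mem_Ioi.mp hy), Function.comp_apply,
    ofComplex_apply_of_im_pos (show 0 < (Complex.I * y).im by simpa using mem_Ioi.mp hy)]

open MeasureTheory Set Filter Asymptotics in
theorem cuspForm_aux_decay (k : ℕ)
    (f : CuspForm (⊤ : Subgroup (Matrix.SpecialLinearGroup (Fin 2) ℤ)) (k : ℤ)) :
    (atI ⇑f) =O[atTop] fun y => Real.exp (-(2 * Real.pi) * y) := by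
  have : CuspFormClass (CuspForm (⊤ : Subgroup (Matrix.SpecialLinearGroup (Fin 2) ℤ)) (k : ℤ))
      (CongruenceSubgroup.Gamma 1) (k : ℤ) := by
    rw [CongruenceSubgroup.Gamma_one_top]; infer_instance
  clear this
  have hd := CuspFormClass.exp_decay_atImInfty (h := 1)
    (Γ := Subgroup.map (Matrix.SpecialLinearGroup.mapGL ℝ) (⊤ : Subgroup (Matrix.SpecialLinearGroup (Fin 2) ℤ)))
    (k := (k : ℤ)) f one_pos
    (by rw [← MonoidHom.range_eq_map]; exact one_mem_strictPeriods_SL)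
  set ψ : ℝ → ℍ := fun y => ofComplex (Complex.I * y) with hψ
  have him : ∀ᶠ y : ℝ in atTop, UpperHalfPlane.im (ψ y) = y := by
    filter_upwards [eventually_gt_atTop 0] with y hy
    simp [hψ, ofComplex_apply_of_im_pos (show 0 < (Complex.I * (y:ℂ)).im by simpa using hy),
      UpperHalfPlane.im]
  have hten : Tendsto ψ atTop atImInfty := by
    rw [UpperHalfPlane.atImInfty, tendsto_comap_iff]
    exact Tendsto.congr' (him.mono fun y h => h.symm) tendsto_id
  have := hd.comp_tendsto hten
  refine (IsBigO.congr' this ?_ ?_)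
  · filter_upwards [eventually_gt_atTop 0] with y hy
    simp [atI, dif_pos hy, hψ, Function.comp,
      ofComplex_apply_of_im_pos (show 0 < (Complex.I * (y:ℂ)).im by simpa using hy)]
  · filter_upwards [him] with y h
    rw [Function.comp_apply, h]
    norm_num

open MeasureTheory Set Filter Asymptotics in
theorem cuspForm_aux_int (k : ℕ)
    (f : CuspForm (⊤ : Subgroup (Matrix.SpecialLinearGroup (Fin 2) ℤ)) (k : ℤ)) (c : ℂ) :
    IntegrableOn (fun y : ℝ => atI ⇑f y * (y : ℂ) ^ c) (Ioi 1) := by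
  have hg := cuspForm_aux_cont k f
  have hO := cuspForm_aux_decay k f
  have hcont : ContinuousOn (fun y : ℝ => atI ⇑f y * (y : ℂ) ^ c) (Ici 1) := by
    refine ContinuousOn.mul (hg.mono fun y hy => mem_Ioi.mpr (lt_of_lt_of_le one_pos hy)) ?_
    intro y hy
    exact (continuousAt_ofReal_cpow_const y c
      (Or.inr (by intro h; rw [h] at hy; simp at hy; linarith))).continuousWithinAt
  have h1 : (fun y : ℝ => (y:ℂ) ^ c) =O[atTop] fun y : ℝ => y ^ c.re := by
    refine IsBigO.of_bound 1 ?_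
    filter_upwards [eventually_gt_atTop 0] with y hy
    rw [Complex.norm_cpow_eq_rpow_re_of_pos hy, one_mul,
      Real.norm_eq_abs, abs_of_pos (Real.rpow_pos_of_pos hy _)]
  have h2 : (fun y : ℝ => Real.exp (-(2 * Real.pi) * y) * y ^ c.re)
      =O[atTop] fun y => Real.exp (-Real.pi * y) := by
    have ht : Tendsto (fun y : ℝ => y ^ c.re * Real.exp (-Real.pi * y)) atTop (nhds 0) :=
      tendsto_rpow_mul_exp_neg_mul_atTop_nhds_zero _ _ Real.pi_pos
    have hb : (fun y : ℝ => y ^ c.re * Real.exp (-Real.pi * y)) =O[atTop] (fun _ => (1:ℝ)) :=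
      ht.isBigO_one ℝ
    have := hb.mul (isBigO_refl (fun y : ℝ => Real.exp (-Real.pi * y)) atTop)
    refine IsBigO.trans (IsBigO.of_bound 1 ?_) (by simpa using this)
    filter_upwards [eventually_gt_atTop 0] with y hy
    rw [one_mul]
    have : Real.exp (-(2*Real.pi) * y) = Real.exp (-Real.pi*y) * Real.exp (-Real.pi*y) := by
      rw [← Real.exp_add]; ring_nf
    rw [this]
    refine le_of_eq ?_
    simp [neg_mul, abs_mul, mul_comm, mul_assoc, mul_left_comm]
  have hbig : (fun y : ℝ => atI ⇑f y * (y : ℂ) ^ c) =O[atTop] fun y => Real.exp (-Real.pi * y) :=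
    (hO.mul h1).trans h2
  refine Iff.mp integrableOn_Ici_iff_integrableOn_Ioi ?_
  exact (hcont.locallyIntegrableOn measurableSet_Ici).integrableOn_of_isBigO_atTop hbig
    ⟨Ioi 0, Ioi_mem_atTop 0, exp_neg_integrableOn_Ioi 0 Real.pi_pos⟩

open MeasureTheory Set Filter Asymptotics in
theorem cuspForm_aux_trans (k : ℕ) (hke : Even k)
    (f : CuspForm (⊤ : Subgroup (Matrix.SpecialLinearGroup (Fin 2) ℤ)) (k : ℤ))
    (y : ℝ) (hy : 0 < y) :
    atI ⇑f y⁻¹ = (-1 : ℂ) ^ (k / 2) * (y : ℂ) ^ k * atI ⇑f y := by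
  have hy' : 0 < y⁻¹ := by positivity
  have hyc : (y : ℂ) ≠ 0 := Complex.ofReal_ne_zero.mpr hy.ne'
  set z : ℍ := ⟨Complex.I * y, by simpa using hy⟩ with hz
  have hSz : (ModularGroup.S • z : ℍ) = (⟨Complex.I * (y⁻¹ : ℝ), by simpa using hy'⟩ : ℍ) := by
    rw [modular_S_smul]
    ext
    push_cast
    rw [UpperHalfPlane.coe_mk]
    show (-(Complex.I * y))⁻¹ = Complex.I * (y : ℂ)⁻¹
    field_simp
    simp [Complex.I_sq]
  have heqn := SlashInvariantForm.slash_action_eqn_SL'' (Γ := ⊤) f (Subgroup.mem_top ModularGroup.S) z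
  rw [hSz] at heqn
  norm_num [ModularGroup.denom_S] at heqn
  have hIk : Complex.I ^ k = (-1 : ℂ) ^ (k / 2) := by
    obtain ⟨r, hr⟩ := hke
    subst hr
    rw [pow_add, ← mul_pow, Complex.I_mul_I, show (r + r) / 2 = r by omega]
  rw [atI, atI, dif_pos hy', dif_pos hy]
  simp only [Complex.ofReal_inv]
  rw [heqn]
  have hzc : ((z : ℂ)) ^ k = Complex.I ^ k * (y : ℂ) ^ k := by
    show (Complex.I * (y:ℂ)) ^ k = _
    rw [mul_pow]
  rw [hzc, hIk]

open MeasureTheory Set in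
/-- For a cusp form `f` of positive even weight `k` for `SL₂(ℤ)` and any `s ∈ ℂ`, the
integrals `∫_0^∞ f(iy) y^{s+(k-1)/2-1} dy` and
`∫_1^∞ f(iy) ((-1)^{k/2} y^{(k-1)/2-s} + y^{s+(k-3)/2}) dy` both converge and are equal. -/
theorem cuspForm_mellin_unfolding (k : ℕ) (hk : 0 < k) (hke : Even k)
    (f : CuspForm (⊤ : Subgroup (Matrix.SpecialLinearGroup (Fin 2) ℤ)) (k : ℤ)) (s : ℂ) :
    IntegrableOn (fun y : ℝ => atI ⇑f y * (y : ℂ) ^ (s + ((k : ℂ) - 1) / 2 - 1))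
      (Ioi (0 : ℝ)) ∧
    IntegrableOn (fun y : ℝ => atI ⇑f y *
        ((-1 : ℂ) ^ (k / 2) * (y : ℂ) ^ (((k : ℂ) - 1) / 2 - s) +
          (y : ℂ) ^ (s + ((k : ℂ) - 3) / 2))) (Ioi (1 : ℝ)) ∧
    (∫ y in Ioi (0 : ℝ), atI ⇑f y * (y : ℂ) ^ (s + ((k : ℂ) - 1) / 2 - 1)) =
      ∫ y in Ioi (1 : ℝ), atI ⇑f y *
        ((-1 : ℂ) ^ (k / 2) * (y : ℂ) ^ (((k : ℂ) - 1) / 2 - s) +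
          (y : ℂ) ^ (s + ((k : ℂ) - 3) / 2)) := by
  set a : ℂ := s + ((k : ℂ) - 1) / 2 with ha
  set F : ℝ → ℂ := fun y => atI ⇑f y * (y : ℂ) ^ (a - 1) with hF
  set G : ℝ → ℂ := fun y => atI ⇑f y * ((-1 : ℂ) ^ (k / 2) * (y : ℂ) ^ (((k : ℂ) - 1) / 2 - s))
    with hG
  -- change of variables data
  have hderiv : ∀ x ∈ Ioi (1:ℝ), HasDerivWithinAt Inv.inv (-(x^2)⁻¹) (Ioi 1) x := fun x hx =>
    (hasDerivAt_inv (by have := mem_Ioi.mp hx; positivity : x ≠ 0)).hasDerivWithinAt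
  have hinj : InjOn Inv.inv (Ioi (1:ℝ)) := inv_injective.injOn
  have himg : Inv.inv '' (Ioi (1:ℝ)) = Ioo 0 1 := by
    rw [Set.image_inv_eq_inv, inv_Ioi₀ one_pos, inv_one]
  -- the substituted integrand equals G on (1, ∞)
  have hpoint : ∀ x ∈ Ioi (1:ℝ), |(-(x^2)⁻¹)| • F x⁻¹ = G x := by
    intro x hx
    have hx1 : (1:ℝ) < x := mem_Ioi.mp hx
    have hx0 : (0:ℝ) < x := lt_trans one_pos hx1
    have hxc : (x:ℂ) ≠ 0 := Complex.ofReal_ne_zero.mpr hx0.ne'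
    have habs : |(-((x:ℝ)^2)⁻¹)| = (x^2)⁻¹ := by
      rw [abs_neg, abs_of_pos (by positivity)]
    rw [habs, hF]
    simp only []
    rw [cuspForm_aux_trans k hke f x hx0, Complex.ofReal_inv]
    have hinv : ((x:ℂ)⁻¹) ^ (a - 1) = (x:ℂ) ^ (-(a - 1)) := by
      rw [Complex.cpow_neg, ← Complex.inv_cpow]
      rw [Complex.arg_ofReal_of_nonneg hx0.le]
      exact Real.pi_ne_zero.symm
    rw [hinv]
    have e1 : ((x:ℂ)) ^ (k:ℕ) = (x:ℂ) ^ ((k:ℕ) : ℂ) := (Complex.cpow_natCast _ _).symm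
    have e2 : ((((x:ℝ)^2)⁻¹ : ℝ) : ℂ) = (x:ℂ) ^ (-2 : ℂ) := by
      push_cast
      rw [show (-2 : ℂ) = -((2:ℕ) : ℂ) by norm_num, Complex.cpow_neg, Complex.cpow_natCast]
    have key : ((((x:ℝ)^2)⁻¹ : ℝ) : ℂ) * ((x:ℂ) ^ (k:ℕ) * (x:ℂ) ^ (-(a - 1)))
        = (x:ℂ) ^ (((k : ℂ) - 1) / 2 - s) := by
      rw [e2, e1, ← Complex.cpow_add _ _ hxc, ← Complex.cpow_add _ _ hxc]
      congr 1
      rw [ha]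
      push_cast
      ring
    have hsmul : ∀ z : ℂ, (((x:ℝ)^2)⁻¹ : ℝ) • z = ((((x:ℝ)^2)⁻¹ : ℝ) : ℂ) * z := fun z =>
      Complex.real_smul
    rw [hsmul, hG]
    simp only []
    linear_combination ((-1:ℂ)^(k/2) * atI ⇑f x) * key
  -- integrability on (1, ∞)
  have hFint : IntegrableOn F (Ioi 1) := cuspForm_aux_int k f (a - 1)
  have hGint : IntegrableOn G (Ioi 1) := by
    have h0 : IntegrableOn (fun x : ℝ => ((-1:ℂ)^(k/2)) * (atI ⇑f x * (x:ℂ) ^ (((k : ℂ) - 1) / 2 - s))) (Ioi 1) :=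
      (cuspForm_aux_int k f (((k : ℂ) - 1) / 2 - s)).const_mul ((-1:ℂ)^(k/2))
    refine h0.congr_fun (fun y _ => ?_) measurableSet_Ioi
    rw [hG]; ring
  -- integrability on (0, 1) via change of variables
  have hIoo : IntegrableOn F (Ioo 0 1) := by
    rw [← himg]
    rw [integrableOn_image_iff_integrableOn_abs_deriv_smul measurableSet_Ioi hderiv hinj]
    exact hGint.congr_fun (fun x hx => (hpoint x hx).symm) measurableSet_Ioi
  have hIci : IntegrableOn F (Ici 1) := Iff.mpr integrableOn_Ici_iff_integrableOn_Ioi hFint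
  -- exponent identity
  have hexp : ∀ y : ℝ, (y:ℂ) ^ (s + ((k : ℂ) - 3) / 2) = (y:ℂ) ^ (a - 1) := by
    intro y; congr 1; rw [ha]; ring
  have hsum : ∀ y : ℝ, atI ⇑f y *
      ((-1 : ℂ) ^ (k / 2) * (y : ℂ) ^ (((k : ℂ) - 1) / 2 - s) +
        (y : ℂ) ^ (s + ((k : ℂ) - 3) / 2)) = G y + F y := by
    intro y
    rw [hexp y, hG, hF]
    ring
  refine ⟨?_, ?_, ?_⟩
  · rw [← Ioo_union_Ici_eq_Ioi (by norm_num : (0:ℝ) < 1)]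
    exact hIoo.union hIci
  · have h1 : IntegrableOn (fun y : ℝ => G y + F y) (Ioi 1) := hGint.add hFint
    refine h1.congr_fun (fun y _ => ?_) measurableSet_Ioi
    exact (hsum y).symm
  · calc (∫ y in Ioi (0:ℝ), F y)
        = (∫ y in Ioo (0:ℝ) 1, F y) + ∫ y in Ici (1:ℝ), F y := by
          rw [← Ioo_union_Ici_eq_Ioi (by norm_num : (0:ℝ) < 1),
            setIntegral_union (by simp [Set.disjoint_left] : Disjoint (Ioo (0:ℝ) 1) (Ici 1)) measurableSet_Ici hIoo hIci]
      _ = (∫ y in Ioi (1:ℝ), G y) + ∫ y in Ioi (1:ℝ), F y := by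
          congr 1
          · rw [← himg, integral_image_eq_integral_abs_deriv_smul measurableSet_Ioi hderiv hinj]
            exact setIntegral_congr_fun measurableSet_Ioi hpoint
          · exact integral_Ici_eq_integral_Ioi
      _ = ∫ y in Ioi (1:ℝ), (G y + F y) := (integral_add hGint hFint).symm
      _ = _ := by
          refine setIntegral_congr_fun measurableSet_Ioi (fun y _ => ?_)
          exact (hsum y).symm
end

section
/- Let k be a positive even integer and let f be a cusp form of weight k for the full modular group SL₂(ℤ) such that f(iy) is a (strictly) positive real number for every real y > 1. Define Λ_f(s) = ∫_1^∞ f(iy) · ((−1)^{k/2} y^{(k−1)/2−s} + y^{s+(k−3)/2}) dy. Then for every natural number m, the m-th derivative Λ_f^{(m)}(1/2) is a nonnegative real number. -/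
open Complex UpperHalfPlane

section SuperPosAux

open MeasureTheory Set Filter Metric Asymptotics

/-- The point `iy` of the upper half-plane, for `y > 0` (junk value `i` otherwise). -/
noncomputable def ptI (y : ℝ) : ℍ :=
  if h : 0 < y then ⟨Complex.I * y, by simpa using h⟩ else ⟨Complex.I, by simp⟩

lemma atI_eq (f : ℍ → ℂ) {y : ℝ} (h : 0 < y) : atI f y = f (ptI y) := by
  simp [atI, ptI, h]

lemma ptI_im {y : ℝ} (h : 0 < y) : (ptI y).im = y := by
  simp [ptI, h, UpperHalfPlane.im]

lemma tendsto_ptI : Tendsto ptI atTop atImInfty := by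
  rw [UpperHalfPlane.atImInfty, tendsto_comap_iff]
  refine Tendsto.congr' ?_ tendsto_id
  filter_upwards [eventually_gt_atTop 0] with y hy
  exact (ptI_im hy).symm

lemma atI_continuousOn {k : ℤ}
    (f : CuspForm (⊤ : Subgroup (Matrix.SpecialLinearGroup (Fin 2) ℤ)) k) :
    ContinuousOn (atI ⇑f) (Ioi 0) := by
  rw [continuousOn_iff_continuous_restrict]
  have key : (Ioi (0:ℝ)).domRestrict (atI ⇑f)
      = ⇑f ∘ (fun y : Ioi (0:ℝ) =>
        (⟨Complex.I * y, by simpa using mem_Ioi.mp y.2⟩ : ℍ)) := by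
    funext y
    have hy : (0:ℝ) < y := y.2
    simp [atI, hy]
  rw [key]
  exact f.holo'.continuous.comp (Continuous.upperHalfPlaneMk
    (continuous_const.mul (Complex.continuous_ofReal.comp continuous_subtype_val)) _)

lemma exp_decay_top {k : ℤ}
    (f : CuspForm (⊤ : Subgroup (Matrix.SpecialLinearGroup (Fin 2) ℤ)) k) :
    ⇑f =O[atImInfty] fun τ => Real.exp (-2 * Real.pi * τ.im) := by
  have h : CongruenceSubgroup.Gamma 1 = (⊤ : Subgroup (Matrix.SpecialLinearGroup (Fin 2) ℤ)) :=
    CongruenceSubgroup.Gamma_one_top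
  revert f
  rw [← h]
  intro f
  simpa using CuspFormClass.exp_decay_atImInfty (h := 1) (f := f) one_pos (by simp)

lemma atI_isBigO {k : ℤ}
    (f : CuspForm (⊤ : Subgroup (Matrix.SpecialLinearGroup (Fin 2) ℤ)) k) :
    (atI ⇑f) =O[atTop] fun y => Real.exp (-2 * Real.pi * y) := by
  have h := (exp_decay_top f).comp_tendsto tendsto_ptI
  refine h.congr' ?_ ?_
  · filter_upwards [eventually_gt_atTop 0] with y hy
    exact (atI_eq (⇑f) hy).symm
  · filter_upwards [eventually_gt_atTop 0] with y hy
    simp [ptI_im hy]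

lemma aux_exp_bigO (p : ℝ) :
    (fun y : ℝ => Real.exp (-2 * Real.pi * y) * y ^ p) =O[atTop]
      fun y => Real.exp (-1 * y) := by
  have hb : (0:ℝ) < 2 * Real.pi - 1 := by nlinarith [Real.pi_gt_three]
  have ht := tendsto_rpow_mul_exp_neg_mul_atTop_nhds_zero p (2 * Real.pi - 1) hb
  rw [Asymptotics.isBigO_iff]
  refine ⟨1, ?_⟩
  have h1 : ∀ᶠ x : ℝ in atTop, x ^ p * Real.exp (-(2 * Real.pi - 1) * x) ≤ 1 := by
    filter_upwards [ht.eventually (eventually_le_nhds one_pos)] with x hx using hx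
  filter_upwards [h1, eventually_gt_atTop 0] with x hx hx0
  have he : Real.exp (-2 * Real.pi * x) * x ^ p
      = (x ^ p * Real.exp (-(2 * Real.pi - 1) * x)) * Real.exp (-1 * x) := by
    rw [show (-2 * Real.pi * x) = (-(2 * Real.pi - 1) * x) + (-1 * x) by ring, Real.exp_add]
    ring
  rw [he, Real.norm_eq_abs, Real.norm_eq_abs, _root_.abs_of_nonneg (Real.exp_pos _).le, one_mul]
  have h2 : |x ^ p * Real.exp (-(2 * Real.pi - 1) * x)|
      = x ^ p * Real.exp (-(2 * Real.pi - 1) * x) :=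
    _root_.abs_of_nonneg (by positivity)
  calc |(x ^ p * Real.exp (-(2 * Real.pi - 1) * x)) * Real.exp (-1 * x)|
      = (x ^ p * Real.exp (-(2 * Real.pi - 1) * x)) * Real.exp (-1 * x) := by
        rw [abs_mul, h2, _root_.abs_of_nonneg (Real.exp_pos _).le]
    _ ≤ 1 * Real.exp (-1 * x) := mul_le_mul_of_nonneg_right hx (Real.exp_pos _).le
    _ = Real.exp (-1 * x) := one_mul _

lemma atI_integrable {k : ℤ}
    (f : CuspForm (⊤ : Subgroup (Matrix.SpecialLinearGroup (Fin 2) ℤ)) k) (p : ℝ) :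
    IntegrableOn (fun y : ℝ => ‖atI ⇑f y‖ * y ^ p) (Ioi 1) := by
  apply integrable_of_isBigO_exp_neg (b := 1) one_pos
  · apply ContinuousOn.mul
    · exact ((atI_continuousOn f).mono
        (fun y (hy : 1 ≤ y) => lt_of_lt_of_le one_pos hy)).norm
    · intro y hy
      exact (Real.continuousAt_rpow_const y p
        (Or.inl (ne_of_gt (lt_of_lt_of_le one_pos hy)))).continuousWithinAt
  · exact ((atI_isBigO f).norm_left.mul (isBigO_refl _ _)).trans (aux_exp_bigO p)

/-- The integrand of the `m`-th derivative of the completed `L`-function. -/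
noncomputable def Gaux (F : ℝ → ℂ) (A a b : ℂ) (m : ℕ) (s : ℂ) (y : ℝ) : ℂ :=
  F y * (A * (-((Real.log y : ℝ) : ℂ)) ^ m * (y : ℂ) ^ (a - s) +
    ((Real.log y : ℝ) : ℂ) ^ m * (y : ℂ) ^ (s + b))

lemma Gaux_norm_le {F : ℝ → ℂ} {A : ℂ} (hA : ‖A‖ ≤ 1) (a b : ℂ) (m : ℕ) (s₀ s : ℂ)
    (hs : s ∈ ball s₀ 1) {y : ℝ} (hy : y ∈ Ioi 1) :
    ‖Gaux F A a b m s y‖ ≤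
      2 * (‖F y‖ * y ^ (|a.re| + |b.re| + |s₀.re| + 1 + m)) := by
  have hy1 : (1:ℝ) < y := hy
  have h0 : (0:ℝ) < y := lt_trans one_pos hy1
  set B : ℝ := |a.re| + |b.re| + |s₀.re| + 1 + m with hB
  have hsre : |s.re - s₀.re| ≤ 1 := by
    have h1 : dist s s₀ < 1 := mem_ball.mp hs
    have h2 : |(s - s₀).re| ≤ ‖s - s₀‖ := Complex.abs_re_le_norm _
    rw [Complex.dist_eq] at h1
    simpa [Complex.sub_re] using h2.trans h1.le
  have hsre' := abs_le.mp hsre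
  have e1 : (a - s).re ≤ B - m := by
    rw [Complex.sub_re a s]
    simp only [hB]
    linarith [hsre'.2, hsre'.1, le_abs_self a.re, neg_abs_le s₀.re, abs_nonneg b.re]
  have e2 : (s + b).re ≤ B - m := by
    rw [Complex.add_re s b]
    simp only [hB]
    linarith [hsre'.2, le_abs_self b.re, le_abs_self s₀.re, abs_nonneg a.re]
  have hlog : |Real.log y| ^ m ≤ y ^ (m : ℝ) := by
    rw [_root_.abs_of_nonneg (Real.log_nonneg hy1.le), Real.rpow_natCast y m]
    exact pow_le_pow_left₀ (Real.log_nonneg hy1.le)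
      ((Real.log_le_sub_one_of_pos h0).trans (by linarith)) m
  have hcp : ∀ w : ℂ, w.re ≤ B - m → ‖(y : ℂ) ^ w‖ ≤ y ^ (B - (m:ℝ)) := by
    intro w hw
    rw [Complex.norm_cpow_eq_rpow_re_of_pos h0]
    exact Real.rpow_le_rpow_of_exponent_le hy1.le hw
  have key : ∀ w : ℂ, w.re ≤ B - m →
      |Real.log y| ^ m * ‖(y : ℂ) ^ w‖ ≤ y ^ B := by
    intro w hw
    calc |Real.log y| ^ m * ‖(y : ℂ) ^ w‖ ≤ y ^ (m : ℝ) * y ^ (B - (m:ℝ)) := by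
          apply mul_le_mul hlog (hcp w hw) (norm_nonneg _)
          positivity
      _ = y ^ B := by rw [← Real.rpow_add h0]; ring_nf
  have t1 : ‖A * (-((Real.log y : ℝ) : ℂ)) ^ m * (y : ℂ) ^ (a - s)‖ ≤ y ^ B := by
    rw [norm_mul, norm_mul, norm_pow, norm_neg, Complex.norm_real, Real.norm_eq_abs]
    calc ‖A‖ * |Real.log y| ^ m * ‖(y : ℂ) ^ (a - s)‖
        ≤ 1 * (|Real.log y| ^ m * ‖(y : ℂ) ^ (a - s)‖) := by
          rw [mul_assoc]
          apply mul_le_mul_of_nonneg_right hA (by positivity)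
      _ ≤ y ^ B := by rw [one_mul]; exact key _ e1
  have t2 : ‖((Real.log y : ℝ) : ℂ) ^ m * (y : ℂ) ^ (s + b)‖ ≤ y ^ B := by
    rw [norm_mul, norm_pow, Complex.norm_real, Real.norm_eq_abs]
    exact key _ e2
  calc ‖Gaux F A a b m s y‖
      ≤ ‖F y‖ * (‖A * (-((Real.log y : ℝ) : ℂ)) ^ m * (y : ℂ) ^ (a - s)‖ +
          ‖((Real.log y : ℝ) : ℂ) ^ m * (y : ℂ) ^ (s + b)‖) := by
        rw [Gaux, norm_mul]
        exact mul_le_mul_of_nonneg_left (norm_add_le _ _) (norm_nonneg _)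
    _ ≤ ‖F y‖ * (y ^ B + y ^ B) :=
        mul_le_mul_of_nonneg_left (add_le_add t1 t2) (norm_nonneg _)
    _ = 2 * (‖F y‖ * y ^ B) := by ring

lemma Gaux_continuousOn {F : ℝ → ℂ} (hF : ContinuousOn F (Ioi 0)) (A a b : ℂ) (m : ℕ) (s : ℂ) :
    ContinuousOn (Gaux F A a b m s) (Ioi 1) := by
  have hsub : (Ioi (1:ℝ)) ⊆ Ioi 0 := fun y hy => mem_Ioi.mpr (lt_trans one_pos (mem_Ioi.mp hy))
  have hlog : ContinuousOn (fun y : ℝ => ((Real.log y : ℝ) : ℂ)) (Ioi 1) :=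
    Complex.continuous_ofReal.comp_continuousOn
      (Real.continuousOn_log.mono (fun y hy => ne_of_gt (hsub hy)))
  have hcpow : ∀ w : ℂ, ContinuousOn (fun y : ℝ => (y : ℂ) ^ w) (Ioi 1) := by
    intro w y hy
    have h0 : (0:ℝ) < y := hsub hy
    exact ((continuousAt_cpow_const (by simp [Complex.mem_slitPlane_iff, h0])).comp
      Complex.continuous_ofReal.continuousAt).continuousWithinAt
  exact (hF.mono hsub).mul
    ((((continuousOn_const.mul (hlog.neg.pow m)).mul (hcpow (a - s))).add
      ((hlog.pow m).mul (hcpow (s + b)))))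

lemma Gaux_aestronglyMeasurable {F : ℝ → ℂ} (hF : ContinuousOn F (Ioi 0)) (A a b : ℂ)
    (m : ℕ) (s : ℂ) :
    AEStronglyMeasurable (Gaux F A a b m s) (volume.restrict (Ioi 1)) :=
  (Gaux_continuousOn hF A a b m s).aestronglyMeasurable measurableSet_Ioi

lemma Gaux_hasDerivAt (F : ℝ → ℂ) (A a b : ℂ) (m : ℕ) (s : ℂ) {y : ℝ} (hy : y ∈ Ioi 1) :
    HasDerivAt (fun s => Gaux F A a b m s y) (Gaux F A a b (m + 1) s y) s := by
  have h0 : (0:ℝ) < y := lt_trans one_pos hy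
  have hy0 : (y : ℂ) ≠ 0 := by simpa using ne_of_gt h0
  have h1 : HasDerivAt (fun s : ℂ => a - s) (-1) s := (hasDerivAt_id s).const_sub a
  have h2 : HasDerivAt (fun s : ℂ => s + b) 1 s := (hasDerivAt_id s).add_const b
  have c1 : HasDerivAt (fun s : ℂ => (y : ℂ) ^ (a - s))
      ((y : ℂ) ^ (a - s) * Complex.log y * (-1)) s := h1.const_cpow (Or.inl hy0)
  have c2 : HasDerivAt (fun s : ℂ => (y : ℂ) ^ (s + b))
      ((y : ℂ) ^ (s + b) * Complex.log y * 1) s := h2.const_cpow (Or.inl hy0)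
  have hL : Complex.log (y : ℂ) = ((Real.log y : ℝ) : ℂ) := (Complex.ofReal_log h0.le).symm
  have := ((c1.const_mul (A * (-((Real.log y : ℝ) : ℂ)) ^ m)).add
    (c2.const_mul (((Real.log y : ℝ) : ℂ) ^ m))).const_mul (F y)
  refine this.congr_deriv ?_
  simp only [Gaux, hL]
  ring

lemma Gaux_integral_hasDerivAt {F : ℝ → ℂ} {A : ℂ} (hF : ContinuousOn F (Ioi 0))
    (hA : ‖A‖ ≤ 1) (hI : ∀ p : ℝ, IntegrableOn (fun y => ‖F y‖ * y ^ p) (Ioi 1))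
    (a b : ℂ) (m : ℕ) (s₀ : ℂ) :
    HasDerivAt (fun s => ∫ y in Ioi (1:ℝ), Gaux F A a b m s y)
      (∫ y in Ioi (1:ℝ), Gaux F A a b (m + 1) s₀ y) s₀ := by
  set B : ℝ := |a.re| + |b.re| + |s₀.re| + 1
  have hbound_int : Integrable (fun y : ℝ => 2 * (‖F y‖ * y ^ (B + (m + 1 : ℕ))))
      (volume.restrict (Ioi 1)) := (hI (B + (m + 1 : ℕ))).const_mul 2
  have hmem : s₀ ∈ ball s₀ 1 := mem_ball_self one_pos
  have hInt : Integrable (Gaux F A a b m s₀) (volume.restrict (Ioi 1)) := by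
    refine Integrable.mono' ((hI (B + (m : ℕ))).const_mul 2)
      (Gaux_aestronglyMeasurable hF A a b m s₀) ?_
    rw [ae_restrict_iff' measurableSet_Ioi]
    exact ae_of_all _ fun y hy => Gaux_norm_le hA a b m s₀ s₀ hmem hy
  have h := hasDerivAt_integral_of_dominated_loc_of_deriv_le (F := fun s y => Gaux F A a b m s y)
    (F' := fun s y => Gaux F A a b (m + 1) s y)
    (bound := fun y => 2 * (‖F y‖ * y ^ (B + (m + 1 : ℕ)))) (ball_mem_nhds s₀ one_pos)
    (Eventually.of_forall fun s => Gaux_aestronglyMeasurable hF A a b m s)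
    hInt (Gaux_aestronglyMeasurable hF A a b (m + 1) s₀) ?_ hbound_int ?_
  · exact h.2
  · rw [ae_restrict_iff' measurableSet_Ioi]
    exact ae_of_all _ fun y hy s hs => Gaux_norm_le hA a b (m + 1) s₀ s hs hy
  · rw [ae_restrict_iff' measurableSet_Ioi]
    exact ae_of_all _ fun y hy s _ => Gaux_hasDerivAt F A a b m s hy

end SuperPosAux

open MeasureTheory Set in
/-- Super-positivity: if `f` is a cusp form of positive even weight `k` for `SL₂(ℤ)`
with `f(iy)` a strictly positive real number for all real `y > 1`, then every
derivative of `Λ_f(s) = ∫_1^∞ f(iy) ((-1)^{k/2} y^{(k-1)/2-s} + y^{s+(k-3)/2}) dy` at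
`s = 1/2` is a nonnegative real number. -/
theorem cuspForm_superpositivity (k : ℕ) (hk : 0 < k) (hke : Even k)
    (f : CuspForm (⊤ : Subgroup (Matrix.SpecialLinearGroup (Fin 2) ℤ)) (k : ℤ))
    (hf : ∀ y : ℝ, 1 < y → ∃ r : ℝ, 0 < r ∧ atI ⇑f y = r)
    (Λ : ℂ → ℂ)
    (hΛ : ∀ s : ℂ, Λ s = ∫ y in Ioi (1 : ℝ), atI ⇑f y *
        ((-1 : ℂ) ^ (k / 2) * (y : ℂ) ^ (((k : ℂ) - 1) / 2 - s) +
          (y : ℂ) ^ (s + ((k : ℂ) - 3) / 2))) :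
    ∀ m : ℕ, ∃ r : ℝ, 0 ≤ r ∧ iteratedDeriv m Λ (1 / 2) = r := by
  intro m
  have hF : ContinuousOn (atI ⇑f) (Ioi 0) := atI_continuousOn f
  have hI : ∀ p : ℝ, IntegrableOn (fun y : ℝ => ‖atI ⇑f y‖ * y ^ p) (Ioi 1) :=
    atI_integrable f
  set A : ℂ := (-1 : ℂ) ^ (k / 2) with hA_def
  have hA : ‖A‖ ≤ 1 := by simp [hA_def]
  set a : ℂ := ((k : ℂ) - 1) / 2 with ha_def
  set b : ℂ := ((k : ℂ) - 3) / 2 with hb_def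
  have key : ∀ n : ℕ, iteratedDeriv n Λ
      = fun s => ∫ y in Ioi (1:ℝ), Gaux (atI ⇑f) A a b n s y := by
    intro n
    induction n with
    | zero =>
      funext s
      rw [iteratedDeriv_zero, hΛ s]
      congr 1
      funext y
      simp [Gaux]
    | succ n ih =>
      funext s
      rw [iteratedDeriv_succ, ih]
      exact (Gaux_integral_hasDerivAt hF hA hI a b n s).deriv
  rw [key m]
  refine ⟨∫ y in Ioi (1:ℝ),
    ((-1:ℝ) ^ (k / 2) * (-1) ^ m + 1) *
      ((atI ⇑f y).re * Real.log y ^ m * y ^ (((k:ℝ) - 2) / 2)), ?_, ?_⟩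
  · apply setIntegral_nonneg measurableSet_Ioi
    intro y hy
    have hy1 : (1:ℝ) < y := hy
    have h3 : (0:ℝ) < y := lt_trans one_pos hy1
    obtain ⟨r, hr, hre⟩ := hf y hy1
    have hrre : (atI ⇑f y).re = r := by rw [hre, Complex.ofReal_re]
    have hc₀ : 0 ≤ ((-1:ℝ) ^ (k / 2) * (-1) ^ m + 1) := by
      rw [← pow_add]
      rcases Nat.even_or_odd (k / 2 + m) with he | ho
      · rw [he.neg_one_pow]; norm_num
      · rw [ho.neg_one_pow]; norm_num
    have h2 : 0 ≤ Real.log y := Real.log_nonneg hy1.le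
    exact mul_nonneg hc₀ (mul_nonneg (mul_nonneg (hrre ▸ hr.le) (pow_nonneg h2 m))
      (Real.rpow_nonneg h3.le _))
  · rw [show ((∫ y in Ioi (1:ℝ), ((-1:ℝ) ^ (k / 2) * (-1) ^ m + 1) *
        ((atI ⇑f y).re * Real.log y ^ m * y ^ (((k:ℝ) - 2) / 2)) : ℝ) : ℂ)
        = ∫ y in Ioi (1:ℝ), ((((-1:ℝ) ^ (k / 2) * (-1) ^ m + 1) *
          ((atI ⇑f y).re * Real.log y ^ m * y ^ (((k:ℝ) - 2) / 2)) : ℝ) : ℂ)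
      from (integral_ofReal).symm]
    apply setIntegral_congr_fun measurableSet_Ioi
    intro y hy
    have hy1 : (1:ℝ) < y := hy
    have h3 : (0:ℝ) < y := lt_trans one_pos hy1
    obtain ⟨r, hr, hre⟩ := hf y hy1
    have hrre : (atI ⇑f y).re = r := by rw [hre, Complex.ofReal_re]
    have hcp : ((y : ℂ)) ^ (((((k:ℝ) - 2) / 2 : ℝ)) : ℂ)
        = (((y ^ (((k:ℝ) - 2) / 2) : ℝ)) : ℂ) := (Complex.ofReal_cpow h3.le _).symm
    have hae : a - 1 / 2 = (((((k:ℝ) - 2) / 2 : ℝ)) : ℂ) := by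
      rw [ha_def]; push_cast; ring
    have hbe : (1 / 2 : ℂ) + b = (((((k:ℝ) - 2) / 2 : ℝ)) : ℂ) := by
      rw [hb_def]; push_cast; ring
    have hA' : A = ((((-1:ℝ) ^ (k / 2) : ℝ)) : ℂ) := by rw [hA_def]; push_cast; ring
    simp only [Gaux]
    rw [hae, hbe, hcp, hre, hA', Complex.ofReal_re]
    push_cast
    ring
end

section
/- Fix k ∈ {12, 16, 20} and define the completed L-function Λ_k(s) = ∫_1^∞ Δ_k(iy) · ((−1)^{k/2} y^{(k−1)/2−s} + y^{s+(k−3)/2}) dy. Then Λ_k(1/2) is a (strictly) positive real number; in particular Λ_k does not vanish at the central point s = 1/2. -/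
open Complex

/-- `Q z = e^{2πiz}`. -/
noncomputable def Q (z : ℂ) : ℂ := Complex.exp (2 * Real.pi * Complex.I * z)

/-- Ramanujan's Delta function, `Δ(z) = q ∏_{n=1}^∞ (1 - q^n)^24` with `q = e^{2πiz}`. -/
noncomputable def Delta (z : ℂ) : ℂ := Q z * ∏' n : ℕ, (1 - Q z ^ (n + 1)) ^ 24

/-- The normalized Eisenstein series of weight `2k` for `SL₂(ℤ)`:
`E_{2k}(z) = 1 - (4k / B_{2k}) ∑_{n=1}^∞ σ_{2k-1}(n) q^n` with `q = e^{2πiz}`. -/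
noncomputable def Eis (k : ℕ) (z : ℂ) : ℂ :=
  1 - (4 * k / ((bernoulli (2 * k) : ℚ) : ℂ)) *
    ∑' n : ℕ, ((ArithmeticFunction.sigma (2 * k - 1)) (n + 1) : ℂ) * Q z ^ (n + 1)

/-- For `k ∈ {12, 16, 18, 20, 22, 26}`, `Δ_k(z) = Δ(z) · E_{k-12}(z)`, with the
convention `E_0 = 1` (so `Δ_12 = Δ`). -/
noncomputable def DeltaK (k : ℕ) (z : ℂ) : ℂ :=
  Delta z * (if k = 12 then 1 else Eis ((k - 12) / 2) z)

/-! ### Auxiliary real-analytic machinery -/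

/-- Clamped version of `e^{-2πy}`; agrees with it for `y ≥ 1`. -/
noncomputable def tau (y : ℝ) : ℝ := min (Real.exp (-(2 * Real.pi * y))) (1/2)

lemma tau_pos (y : ℝ) : 0 < tau y := lt_min (Real.exp_pos _) (by norm_num)
lemma tau_le_half (y : ℝ) : tau y ≤ 1/2 := min_le_right _ _
lemma tau_le_exp (y : ℝ) : tau y ≤ Real.exp (-(2 * Real.pi * y)) := min_le_left _ _
lemma continuous_tau : Continuous tau :=
  (Real.continuous_exp.comp (by continuity)).min continuous_const

lemma exp_neg_one_le : Real.exp (-1) ≤ 1/2 := by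
  rw [Real.exp_neg, inv_le_comm₀ (Real.exp_pos 1) (by norm_num)]
  have := Real.add_one_le_exp (1:ℝ)
  linarith

lemma tau_eq {y : ℝ} (hy : 1 ≤ y) : tau y = Real.exp (-(2 * Real.pi * y)) := by
  apply min_eq_left
  have h1 : Real.exp (-(2 * Real.pi * y)) ≤ Real.exp (-1) := by
    apply Real.exp_le_exp.2
    nlinarith [Real.pi_gt_three]
  linarith [exp_neg_one_le]

lemma pow_tau_le_half (y : ℝ) (n : ℕ) : tau y ^ (n+1) ≤ 1/2 := by
  calc tau y ^ (n+1) ≤ tau y ^ 1 :=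
        pow_le_pow_of_le_one (le_of_lt (tau_pos y)) (le_trans (tau_le_half y) (by norm_num))
          (by omega)
    _ = tau y := pow_one _
    _ ≤ 1/2 := tau_le_half y

lemma factor_pos (y : ℝ) (n : ℕ) : 0 < (1 - tau y ^ (n+1)) ^ 24 := by
  have h := pow_tau_le_half y n
  have : (0:ℝ) < 1 - tau y ^ (n+1) := by linarith
  positivity

lemma factor_le_one (y : ℝ) (n : ℕ) : (1 - tau y ^ (n+1)) ^ 24 ≤ 1 := by
  have h := pow_tau_le_half y n
  have h2 : 0 < tau y ^ (n+1) := pow_pos (tau_pos y) _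
  exact pow_le_one₀ (by linarith) (by linarith)

lemma log_bound {x : ℝ} (h0 : 0 ≤ x) (h2 : x ≤ 1/2) : |Real.log ((1-x)^24)| ≤ 48 * x := by
  have h1 : (0:ℝ) < 1 - x := by linarith
  rw [Real.log_pow]
  have hneg : Real.log (1 - x) ≤ 0 := Real.log_nonpos (by linarith) (by linarith)
  have key : -Real.log (1-x) ≤ 2 * x := by
    rw [← Real.log_inv]
    have h3 : Real.log (1-x)⁻¹ ≤ (1-x)⁻¹ - 1 := Real.log_le_sub_one_of_pos (inv_pos.2 h1)
    have hb : (1-x)⁻¹ - 1 = x / (1-x) := by field_simp; ring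
    have hc : x / (1-x) ≤ 2 * x := by
      rw [div_le_iff₀ h1]; nlinarith
    linarith
  have habs : |(24:ℕ) * Real.log (1-x)| = 24 * (-Real.log (1-x)) := by
    rw [abs_mul, _root_.abs_of_nonpos hneg]; norm_num
  rw [habs]; linarith

lemma summable_log (y : ℝ) : Summable (fun n : ℕ => Real.log ((1 - tau y ^ (n+1)) ^ 24)) := by
  apply Summable.of_norm_bounded (g := fun n : ℕ => 48 * (1/2)^(n+1))
  · exact (summable_geometric_of_lt_one (by norm_num) (by norm_num)).mul_left 48 |>.comp_injective
      (add_left_injective 1)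
  · intro n
    rw [Real.norm_eq_abs]
    calc |Real.log ((1 - tau y ^ (n+1)) ^ 24)| ≤ 48 * tau y ^ (n+1) :=
          log_bound (le_of_lt (pow_pos (tau_pos y) _)) (pow_tau_le_half y n)
      _ ≤ 48 * (1/2)^(n+1) := by
          have := pow_le_pow_left₀ (le_of_lt (tau_pos y)) (tau_le_half y) (n+1)
          linarith

/-- The infinite product `∏ (1 - τ(y)^{n+1})^{24}`, written as `exp` of a sum of logs. -/
noncomputable def PP (y : ℝ) : ℝ := Real.exp (∑' n : ℕ, Real.log ((1 - tau y ^ (n+1)) ^ 24))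

lemma PP_pos (y : ℝ) : 0 < PP y := Real.exp_pos _

lemma PP_le_one (y : ℝ) : PP y ≤ 1 := by
  rw [PP, Real.exp_le_one_iff]
  apply tsum_nonpos
  intro n
  have h1 := factor_le_one y n
  have h2 := factor_pos y n
  exact Real.log_nonpos (le_of_lt (by linarith)) (by linarith)

lemma PP_eq_tprod (y : ℝ) : PP y = ∏' n : ℕ, (1 - tau y ^ (n+1)) ^ 24 := by
  have := Real.rexp_tsum_eq_tprod (f := fun n => (1 - tau y ^ (n+1)) ^ 24)
    (fun n => factor_pos y n) (summable_log y)
  exact this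

lemma multipliable_PP (y : ℝ) : Multipliable (fun n : ℕ => (1 - tau y ^ (n+1)) ^ 24) :=
  Real.multipliable_of_summable_log (f := fun n => (1 - tau y ^ (n+1)) ^ 24)
    (fun n => factor_pos y n) (summable_log y)

lemma continuous_PP : Continuous PP := by
  apply Real.continuous_exp.comp
  apply continuous_tsum (u := fun n : ℕ => 48 * (1/2)^(n+1))
  · intro n
    apply Continuous.log ((continuous_const.sub (continuous_tau.pow _)).pow _)
    intro x
    exact ne_of_gt (factor_pos x n)
  · exact (summable_geometric_of_lt_one (by norm_num) (by norm_num)).mul_left 48 |>.comp_injective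
      (add_left_injective 1)
  · intro n y
    rw [Real.norm_eq_abs]
    calc |Real.log ((1 - tau y ^ (n+1)) ^ 24)| ≤ 48 * tau y ^ (n+1) :=
          log_bound (le_of_lt (pow_pos (tau_pos y) _)) (pow_tau_le_half y n)
      _ ≤ 48 * (1/2)^(n+1) := by
          have := pow_le_pow_left₀ (le_of_lt (tau_pos y)) (tau_le_half y) (n+1)
          linarith

lemma sigma_bound (r m : ℕ) : (ArithmeticFunction.sigma r) m ≤ m ^ (r + 1) := by
  rcases Nat.eq_zero_or_pos m with h | h
  · simp [h]
  rw [ArithmeticFunction.sigma_apply]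
  calc ∑ d ∈ m.divisors, d ^ r ≤ ∑ _d ∈ m.divisors, m ^ r := by
        apply Finset.sum_le_sum
        intro d hd
        exact Nat.pow_le_pow_left (Nat.divisor_le hd) r
    _ = m.divisors.card * m ^ r := by rw [Finset.sum_const, smul_eq_mul]
    _ ≤ m * m ^ r := by
        apply Nat.mul_le_mul_right
        have hsub : m.divisors ⊆ Finset.Icc 1 m := by
          intro d hd
          rw [Nat.mem_divisors] at hd
          exact Finset.mem_Icc.2 ⟨Nat.one_le_iff_ne_zero.2
            (fun h0 => hd.2 (by simpa [h0] using hd.1)), Nat.le_of_dvd h hd.1⟩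
        simpa using Finset.card_le_card hsub
    _ = m ^ (r + 1) := by ring

lemma summable_u (r : ℕ) : Summable (fun n : ℕ => ((n+1 : ℕ) ^ (r+1) : ℝ) * (1/2) ^ (n+1)) := by
  have h : Summable (fun n : ℕ => ((n : ℝ)) ^ (r+1) * (1/2) ^ n) :=
    summable_pow_mul_geometric_of_norm_lt_one (r + 1)
      (by rw [Real.norm_eq_abs, abs_of_pos] <;> norm_num)
  have := (summable_nat_add_iff 1).mpr h
  refine this.congr fun n => ?_
  push_cast
  ring

/-- `∑ σ_r(n+1) τ(y)^{n+1}`. -/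
noncomputable def SS (r : ℕ) (y : ℝ) : ℝ :=
  ∑' n : ℕ, ((ArithmeticFunction.sigma r) (n+1) : ℝ) * tau y ^ (n+1)

/-- Uniform bound for the terms of `SS`. -/
noncomputable def SB (r : ℕ) : ℝ := ∑' n : ℕ, ((n+1:ℕ) ^ (r+1) : ℝ) * (1/2) ^ (n+1)

lemma SS_term_bound (r : ℕ) (y : ℝ) (n : ℕ) :
    ‖((ArithmeticFunction.sigma r) (n+1) : ℝ) * tau y ^ (n+1)‖
      ≤ ((n+1:ℕ) ^ (r+1) : ℝ) * (1/2) ^ (n+1) := by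
  rw [Real.norm_eq_abs, _root_.abs_of_nonneg
    (mul_nonneg (Nat.cast_nonneg _) (le_of_lt (pow_pos (tau_pos y) _)))]
  apply mul_le_mul
  · exact_mod_cast sigma_bound r (n+1)
  · exact pow_le_pow_left₀ (le_of_lt (tau_pos y)) (tau_le_half y) (n+1)
  · exact pow_nonneg (le_of_lt (tau_pos y)) _
  · positivity

lemma summable_SS (r : ℕ) (y : ℝ) :
    Summable (fun n : ℕ => ((ArithmeticFunction.sigma r) (n+1) : ℝ) * tau y ^ (n+1)) :=
  Summable.of_norm_bounded (summable_u r) (SS_term_bound r y)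

lemma SS_nonneg (r : ℕ) (y : ℝ) : 0 ≤ SS r y :=
  tsum_nonneg fun _ => mul_nonneg (Nat.cast_nonneg _) (le_of_lt (pow_pos (tau_pos y) _))

lemma SS_bounded (r : ℕ) (y : ℝ) : SS r y ≤ SB r := by
  apply Summable.tsum_le_tsum _ (summable_SS r y) (summable_u r)
  intro n
  have h := SS_term_bound r y n
  rwa [Real.norm_eq_abs, _root_.abs_of_nonneg
    (mul_nonneg (Nat.cast_nonneg _) (le_of_lt (pow_pos (tau_pos y) _)))] at h

lemma continuous_SS (r : ℕ) : Continuous (SS r) := by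
  apply continuous_tsum
  · exact fun n => continuous_const.mul (continuous_tau.pow _)
  · exact summable_u r
  · exact fun n y => SS_term_bound r y n

/-! ### The real integrand -/

noncomputable def GG (m r : ℕ) (c : ℝ) (y : ℝ) : ℝ :=
  2 * y ^ m * (tau y * PP y) * (1 + c * SS r y)

lemma GG_pos (m r : ℕ) {c : ℝ} (hc : 0 ≤ c) {y : ℝ} (hy : 0 < y) : 0 < GG m r c y := by
  have h1 := tau_pos y
  have h2 := PP_pos y
  have h3 := SS_nonneg r y
  have h4 : (0:ℝ) < 1 + c * SS r y := by nlinarith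
  have h5 : (0:ℝ) < y ^ m := pow_pos hy m
  rw [GG]; positivity

lemma continuous_GG (m r : ℕ) (c : ℝ) : Continuous (GG m r c) :=
  ((continuous_const.mul (continuous_pow m)).mul (continuous_tau.mul continuous_PP)).mul
    (continuous_const.add (continuous_const.mul (continuous_SS r)))

lemma pow_le_exp (m : ℕ) (hm : 1 ≤ m) {y : ℝ} (hy : 0 ≤ y) :
    y ^ m ≤ (m / Real.pi) ^ m * Real.exp (Real.pi * y) := by
  have hpi := Real.pi_pos
  have hm' : (0:ℝ) < m := by exact_mod_cast hm
  have h1 : y ≤ (m / Real.pi) * Real.exp (Real.pi * y / m) := by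
    have h0 := Real.add_one_le_exp (Real.pi * y / m)
    have h2 : Real.pi * y / m ≤ Real.exp (Real.pi * y / m) := by linarith
    have h3 := mul_le_mul_of_nonneg_left h2 (le_of_lt (div_pos hm' hpi))
    calc y = (m / Real.pi) * (Real.pi * y / m) := by field_simp
      _ ≤ (m / Real.pi) * Real.exp (Real.pi * y / m) := h3
  calc y ^ m ≤ ((m / Real.pi) * Real.exp (Real.pi * y / m)) ^ m :=
        pow_le_pow_left₀ hy h1 m
    _ = (m / Real.pi) ^ m * Real.exp (Real.pi * y / m) ^ m := mul_pow _ _ _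
    _ = (m / Real.pi) ^ m * Real.exp (Real.pi * y) := by
        rw [← Real.exp_nat_mul]
        congr 1
        field_simp

lemma GG_bound (m r : ℕ) (hm : 1 ≤ m) {c : ℝ} (hc : 0 ≤ c) {y : ℝ} (hy : 1 ≤ y) :
    GG m r c y ≤ (2 * (1 + c * SB r) * (m / Real.pi) ^ m) * Real.exp (-(Real.pi * y)) := by
  have hy0 : (0:ℝ) ≤ y := by linarith
  have h1 := tau_pos y
  have h2 := PP_pos y
  have h3 := SS_nonneg r y
  have hSB : SS r y ≤ SB r := SS_bounded r y
  have hE : 1 + c * SS r y ≤ 1 + c * SB r := by nlinarith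
  have hE0 : (0:ℝ) ≤ 1 + c * SS r y := by nlinarith
  have htp : tau y * PP y ≤ Real.exp (-(2 * Real.pi * y)) :=
    le_trans (mul_le_of_le_one_right (le_of_lt h1) (PP_le_one y)) (tau_le_exp y)
  have hyp : y ^ m ≤ (m / Real.pi) ^ m * Real.exp (Real.pi * y) := pow_le_exp m hm hy0
  have key : GG m r c y ≤ 2 * ((m / Real.pi) ^ m * Real.exp (Real.pi * y)) *
      Real.exp (-(2 * Real.pi * y)) * (1 + c * SB r) := by
    rw [GG]
    have t1 : (0:ℝ) ≤ tau y * PP y := by positivity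
    have t2 : (0:ℝ) ≤ y ^ m := by positivity
    have := mul_le_mul (mul_le_mul (mul_le_mul_of_nonneg_left hyp (by norm_num : (0:ℝ) ≤ 2))
      htp t1 (by positivity)) hE hE0 (by positivity)
    linarith
  calc GG m r c y ≤ _ := key
    _ = (2 * (1 + c * SB r) * (m / Real.pi) ^ m) *
        (Real.exp (Real.pi * y) * Real.exp (-(2 * Real.pi * y))) := by ring
    _ = _ := by rw [← Real.exp_add]; ring_nf

open MeasureTheory Set in
lemma GG_integrableOn (m r : ℕ) (hm : 1 ≤ m) {c : ℝ} (hc : 0 ≤ c) :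
    IntegrableOn (GG m r c) (Ioi 1) := by
  apply Integrable.mono'
    (g := fun y => (2 * (1 + c * SB r) * (m / Real.pi) ^ m) * Real.exp (-(Real.pi * y)))
  · have := (exp_neg_integrableOn_Ioi 1 Real.pi_pos).const_mul
      (2 * (1 + c * SB r) * (m / Real.pi) ^ m)
    simpa [neg_mul] using this
  · exact (continuous_GG m r c).aestronglyMeasurable
  · apply (ae_restrict_iff' measurableSet_Ioi).mpr (ae_of_all _ ?_)
    intro y hy
    rw [Real.norm_eq_abs, _root_.abs_of_nonneg (le_of_lt (GG_pos m r hc (by simp at hy; linarith)))]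
    exact GG_bound m r hm hc (le_of_lt (by simpa using hy))

open MeasureTheory Set in
lemma GG_integral_pos (m r : ℕ) (hm : 1 ≤ m) {c : ℝ} (hc : 0 ≤ c) :
    0 < ∫ y in Ioi (1:ℝ), GG m r c y := by
  rw [setIntegral_pos_iff_support_of_nonneg_ae _ (GG_integrableOn m r hm hc)]
  · have hsub : Ioi (1:ℝ) ⊆ Function.support (GG m r c) ∩ Ioi 1 := by
      intro y hy
      exact ⟨ne_of_gt (GG_pos m r hc (by simp at hy; linarith)), hy⟩
    calc (0:ENNReal) < volume (Ioi (1:ℝ)) := by simp [Real.volume_Ioi]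
      _ ≤ volume (Function.support (GG m r c) ∩ Ioi 1) := measure_mono hsub
  · apply (ae_restrict_iff' measurableSet_Ioi).mpr (ae_of_all _ ?_)
    intro y hy
    exact le_of_lt (GG_pos m r hc (by simp at hy; linarith))

/-! ### Complex–real comparison -/

lemma Q_eq {y : ℝ} (hy : 1 ≤ y) : Q (Complex.I * y) = ((tau y : ℝ) : ℂ) := by
  rw [Q, tau_eq hy, Complex.ofReal_exp]
  congr 1
  push_cast
  rw [show ((2:ℂ) * Real.pi * Complex.I * (Complex.I * y))
      = (2 * Real.pi * y) * (Complex.I * Complex.I) by ring, Complex.I_mul_I]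
  ring

lemma Delta_eq {y : ℝ} (hy : 1 ≤ y) : Delta (Complex.I * y) = ((tau y * PP y : ℝ) : ℂ) := by
  rw [Delta, Q_eq hy, PP_eq_tprod, Complex.ofReal_mul]
  congr 1
  have h := (multipliable_PP y).map_tprod Complex.ofRealHom Complex.continuous_ofReal
  simp only [Complex.ofRealHom_eq_coe] at h
  rw [h]
  apply tprod_congr
  intro n
  push_cast
  ring

lemma bern4 : bernoulli 4 = -1/30 := by
  rw [bernoulli]; norm_num [bernoulli'_four]

lemma bern8 : bernoulli 8 = -1/30 := by
  have c5 : bernoulli' 5 = 0 := by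
    rw [bernoulli'_def]; norm_num [Finset.sum_range_succ, Nat.choose]
  have c6 : bernoulli' 6 = 1/42 := by
    rw [bernoulli'_def]; norm_num [Finset.sum_range_succ, Nat.choose, c5]
  have c7 : bernoulli' 7 = 0 := by
    rw [bernoulli'_def]; norm_num [Finset.sum_range_succ, Nat.choose, c5, c6]
  have c8 : bernoulli' 8 = -1/30 := by
    rw [bernoulli'_def]; norm_num [Finset.sum_range_succ, Nat.choose, c5, c6, c7]
  rw [bernoulli]; norm_num [c8]

lemma tsum_eq (r : ℕ) {y : ℝ} (hy : 1 ≤ y) :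
    ∑' n : ℕ, ((ArithmeticFunction.sigma r) (n+1) : ℂ) * Q (Complex.I * y) ^ (n+1)
      = ((SS r y : ℝ) : ℂ) := by
  rw [Q_eq hy, SS, Complex.ofReal_tsum]
  apply tsum_congr
  intro n
  push_cast
  ring

lemma Eis2_eq {y : ℝ} (hy : 1 ≤ y) :
    Eis 2 (Complex.I * y) = ((1 + 240 * SS 3 y : ℝ) : ℂ) := by
  rw [Eis]
  norm_num [bern4, tsum_eq 3 hy]

lemma Eis4_eq {y : ℝ} (hy : 1 ≤ y) :
    Eis 4 (Complex.I * y) = ((1 + 480 * SS 7 y : ℝ) : ℂ) := by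
  rw [Eis]
  norm_num [bern8, tsum_eq 7 hy]

open MeasureTheory Set in
lemma final_aux (m r : ℕ) (hm : 1 ≤ m) (c : ℝ) (hc : 0 ≤ c) (F : ℝ → ℂ)
    (hF : EqOn F (fun y : ℝ => ((GG m r c y : ℝ) : ℂ)) (Ioi (1:ℝ)))
    (Λv : ℂ) (hv : Λv = ∫ y in Ioi (1:ℝ), F y) :
    (∃ rr : ℝ, 0 < rr ∧ Λv = rr) ∧ Λv ≠ 0 := by
  have key : Λv = ((∫ y in Ioi (1:ℝ), GG m r c y : ℝ) : ℂ) := by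
    rw [hv, setIntegral_congr_fun measurableSet_Ioi hF]
    exact integral_ofReal
  have hpos := GG_integral_pos m r hm hc
  exact ⟨⟨_, hpos, key⟩, by rw [key]; exact_mod_cast ne_of_gt hpos⟩

open MeasureTheory Set in
/-- For `k ∈ {12, 16, 20}`, the central value `Λ_k(1/2)` of
`Λ_k(s) = ∫_1^∞ Δ_k(iy) ((-1)^{k/2} y^{(k-1)/2-s} + y^{s+(k-3)/2}) dy` is a strictly
positive real number; in particular `Λ_k(1/2) ≠ 0`. -/
theorem deltaK_central_value_pos (k : ℕ) (hk : k ∈ ({12, 16, 20} : Set ℕ))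
    (Λ : ℂ → ℂ)
    (hΛ : ∀ s : ℂ, Λ s = ∫ y in Ioi (1 : ℝ), DeltaK k (Complex.I * y) *
        ((-1 : ℂ) ^ (k / 2) * (y : ℂ) ^ (((k : ℂ) - 1) / 2 - s) +
          (y : ℂ) ^ (s + ((k : ℂ) - 3) / 2))) :
    (∃ r : ℝ, 0 < r ∧ Λ (1 / 2) = r) ∧ Λ (1 / 2) ≠ 0 := by
  simp only [Set.mem_insert_iff, Set.mem_singleton_iff] at hk
  rcases hk with rfl | rfl | rfl
  · -- k = 12
    apply final_aux 5 3 (by norm_num) 0 le_rfl _ _ _ (hΛ (1/2))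
    intro y hy
    have hy1 : (1:ℝ) ≤ y := le_of_lt (by simpa using hy)
    have hy0 : (0:ℝ) < y := by linarith
    simp only
    rw [DeltaK, if_pos rfl, Delta_eq hy1]
    have e1 : (((12:ℕ) : ℂ) - 1) / 2 - 1/2 = ((5:ℕ) : ℂ) := by norm_num
    have e2 : (1:ℂ)/2 + (((12:ℕ) : ℂ) - 3) / 2 = ((5:ℕ) : ℂ) := by norm_num
    rw [e1, e2, Complex.cpow_natCast]
    norm_num [GG]
    ring
  · -- k = 16
    apply final_aux 7 3 (by norm_num) 240 (by norm_num) _ _ _ (hΛ (1/2))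
    intro y hy
    have hy1 : (1:ℝ) ≤ y := le_of_lt (by simpa using hy)
    have hy0 : (0:ℝ) < y := by linarith
    simp only
    rw [DeltaK, if_neg (by norm_num), show ((16:ℕ) - 12) / 2 = 2 from rfl,
      Delta_eq hy1, Eis2_eq hy1]
    have e1 : (((16:ℕ) : ℂ) - 1) / 2 - 1/2 = ((7:ℕ) : ℂ) := by norm_num
    have e2 : (1:ℂ)/2 + (((16:ℕ) : ℂ) - 3) / 2 = ((7:ℕ) : ℂ) := by norm_num
    rw [e1, e2, Complex.cpow_natCast]
    norm_num [GG]
    ring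
  · -- k = 20
    apply final_aux 9 7 (by norm_num) 480 (by norm_num) _ _ _ (hΛ (1/2))
    intro y hy
    have hy1 : (1:ℝ) ≤ y := le_of_lt (by simpa using hy)
    have hy0 : (0:ℝ) < y := by linarith
    simp only
    rw [DeltaK, if_neg (by norm_num), show ((20:ℕ) - 12) / 2 = 4 from rfl,
      Delta_eq hy1, Eis4_eq hy1]
    have e1 : (((20:ℕ) : ℂ) - 1) / 2 - 1/2 = ((9:ℕ) : ℂ) := by norm_num
    have e2 : (1:ℂ)/2 + (((20:ℕ) : ℂ) - 3) / 2 = ((9:ℕ) : ℂ) := by norm_num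
    rw [e1, e2, Complex.cpow_natCast]
    norm_num [GG]
    ring
end

section
/- Let k be a positive even integer and let f be a cusp form of weight k for the full modular group SL₂(ℤ). Define Λ_f(s) = ∫_0^∞ f(iy) · y^{s+(k−1)/2−1} dy. Then this integral converges for every s ∈ ℂ, and the functional equation Λ_f(s) = (−1)^{k/2} · Λ_f(1 − s) holds for all s ∈ ℂ. -/
open Complex UpperHalfPlane

open MeasureTheory Set Filter Asymptotics Real CongruenceSubgroup in
lemma atI_inv (k : ℕ) (hke : Even k)
    (f : CuspForm (⊤ : Subgroup (Matrix.SpecialLinearGroup (Fin 2) ℤ)) (k : ℤ))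
    {y : ℝ} (hy : 0 < y) :
    atI ⇑f y⁻¹ = (-1 : ℂ) ^ (k / 2) * (y : ℂ) ^ k * atI ⇑f y := by
  have hy' : 0 < y⁻¹ := inv_pos.mpr hy
  rw [atI, atI, dif_pos hy, dif_pos hy']
  set z : ℍ := ⟨Complex.I * y, by simpa using hy⟩ with hzdef
  have hz : (⟨Complex.I * (y⁻¹ : ℝ), by simpa using hy'⟩ : ℍ) = ModularGroup.S • z := by
    rw [UpperHalfPlane.modular_S_smul]
    apply UpperHalfPlane.ext
    show Complex.I * ((y⁻¹ : ℝ) : ℂ) = (-(Complex.I * (y : ℝ)))⁻¹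
    rw [inv_neg, mul_inv, Complex.inv_I]
    push_cast
    ring
  rw [hz, SlashInvariantForm.slash_action_eqn_SL'' f (Subgroup.mem_top _) z]
  rw [show denom _ (z : ℂ) = (ModularGroup.S 1 0 : ℂ) * z + (ModularGroup.S 1 1 : ℂ) by simp [denom]]
  have hI : (Complex.I) ^ k = (-1 : ℂ) ^ (k / 2) := by
    obtain ⟨m, rfl⟩ := hke
    rw [show m + m = 2 * m by ring, pow_mul, Complex.I_sq, Nat.mul_div_cancel_left _ two_pos]
  have hcoe : (z : ℂ) = Complex.I * (y : ℝ) := rfl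
  have hS0 : (ModularGroup.S 1 0 : ℂ) = 1 := by simp [ModularGroup.S]
  have hS1 : (ModularGroup.S 1 1 : ℂ) = 0 := by simp [ModularGroup.S]
  rw [hS0, hS1, hcoe, zpow_natCast, one_mul, add_zero, mul_pow, hI, mul_assoc]

open MeasureTheory Set Filter Asymptotics Real CongruenceSubgroup Topology in
lemma atI_decay (k : ℕ)
    (f : CuspForm (⊤ : Subgroup (Matrix.SpecialLinearGroup (Fin 2) ℤ)) (k : ℤ)) :
    atI ⇑f =O[atTop] fun y : ℝ => Real.exp (-(2 * π) * y) := by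
  haveI : CuspFormClass
      (CuspForm (⊤ : Subgroup (Matrix.SpecialLinearGroup (Fin 2) ℤ)) (k : ℤ))
      (Gamma 1) (k : ℤ) := by
    rw [Gamma_one_top]; infer_instance
  have hd := CuspFormClass.exp_decay_atImInfty (h := 1) f one_pos (by simp)
  have h1 : Tendsto (fun y : ℝ => (Complex.I * y : ℂ)) atTop (Filter.comap Complex.im atTop) := by
    rw [tendsto_comap_iff]
    refine Tendsto.congr' ?_ tendsto_id
    filter_upwards with y
    simp [Function.comp]
  have h2 := hd.comp_tendsto (tendsto_comap_im_ofComplex.comp h1)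
  refine h2.congr' ?_ ?_
  · filter_upwards [eventually_gt_atTop (0:ℝ)] with y hy
    have him : 0 < (Complex.I * (y:ℝ)).im := by simpa using hy
    simp only [Function.comp_apply, ofComplex_apply_of_im_pos him]
    rw [atI, dif_pos hy]
  · filter_upwards [eventually_gt_atTop (0:ℝ)] with y hy
    have him : 0 < (Complex.I * (y:ℝ)).im := by simpa using hy
    simp only [Function.comp_apply, ofComplex_apply_of_im_pos him]
    have him2 : UpperHalfPlane.im (⟨Complex.I * (y:ℝ), him⟩ : ℍ) = y := by
      simp [UpperHalfPlane.im]
    rw [him2]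
    congr 1
    ring

open MeasureTheory Set Filter Asymptotics Real CongruenceSubgroup Topology in
lemma atI_mellinConvergent (k : ℕ) (hke : Even k)
    (f : CuspForm (⊤ : Subgroup (Matrix.SpecialLinearGroup (Fin 2) ℤ)) (k : ℤ)) (s : ℂ) :
    MellinConvergent (atI ⇑f) s := by
  have hcont : ContinuousOn (atI ⇑f) (Ioi 0) := by
    have heq : ∀ y ∈ Ioi (0:ℝ), atI ⇑f y = (fun y : ℝ => (⇑f ∘ ofComplex) (Complex.I * y)) y := by
      intro y hy
      have him : 0 < (Complex.I * (y:ℝ)).im := by simpa using hy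
      simp only [Function.comp_apply, ofComplex_apply_of_im_pos him]
      rw [atI, dif_pos (mem_Ioi.mp hy)]
      
    refine ContinuousOn.congr ?_ heq
    intro y hy
    have him : 0 < (Complex.I * (y:ℝ)).im := by simpa using (mem_Ioi.mp hy)
    have hin : ContinuousAt (fun y : ℝ => (Complex.I * y : ℂ)) y := by fun_prop
    exact (ContinuousAt.comp (g := ⇑f ∘ ofComplex) (f := fun y : ℝ => (Complex.I * y : ℂ))
      ((UpperHalfPlane.mdifferentiable_iff.mp (ModularFormClass.holo f) _ him).differentiableAt (isOpen_upperHalfPlaneSet.mem_nhds him)).continuousAt hin).continuousWithinAt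
  have hloc : LocallyIntegrableOn (atI ⇑f) (Ioi 0) :=
    hcont.locallyIntegrableOn measurableSet_Ioi
  have hTop := atI_decay k f
  have hZero : ∀ b : ℝ, atI ⇑f =O[𝓝[>] (0:ℝ)] fun y : ℝ => y ^ (-b) := by
    intro b
    have h1 : atI ⇑f =O[atTop] fun y : ℝ => y ^ (b - k) :=
      hTop.trans (isLittleO_exp_neg_mul_rpow_atTop Real.two_pi_pos _).isBigO
    obtain ⟨C, hC⟩ := (h1.comp_tendsto tendsto_inv_nhdsGT_zero).bound
    refine IsBigO.of_bound C ?_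
    filter_upwards [hC, self_mem_nhdsWithin] with y hy hy0
    simp only [Function.comp_apply] at hy
    have hy0' : (0:ℝ) < y := hy0
    have hyinv : (0:ℝ) < y⁻¹ := inv_pos.mpr hy0'
    have hrel := atI_inv k hke f hyinv
    rw [inv_inv] at hrel
    have hn : ‖atI ⇑f y‖ = (y⁻¹) ^ (k:ℕ) * ‖atI ⇑f y⁻¹‖ := by
      rw [hrel]
      simp [norm_mul, norm_pow, Complex.norm_real, abs_of_pos hyinv, abs_of_pos hy0']
    calc ‖atI ⇑f y‖ = (y⁻¹) ^ (k:ℕ) * ‖atI ⇑f y⁻¹‖ := hn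
      _ ≤ (y⁻¹) ^ (k:ℕ) * (C * ‖(y⁻¹) ^ (b - (k:ℝ))‖) :=
          mul_le_mul_of_nonneg_left hy (by positivity)
      _ = C * ‖y ^ (-b)‖ := by
          rw [Real.norm_rpow_of_nonneg hyinv.le, Real.norm_rpow_of_nonneg hy0'.le,
            Real.norm_eq_abs, Real.norm_eq_abs,
            abs_of_pos hyinv, abs_of_pos hy0', ← Real.rpow_natCast y⁻¹ k,
            ← mul_assoc, mul_comm ((y⁻¹) ^ ((k:ℕ):ℝ)) C, mul_assoc,
            ← Real.rpow_add hyinv, Real.inv_rpow hy0'.le, ← Real.rpow_neg hy0'.le]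
          norm_num
  exact mellinConvergent_of_isBigO_rpow_exp Real.two_pi_pos hloc hTop (hZero (s.re - 1))
    (by linarith)

open MeasureTheory Set in
/-- For a cusp form `f` of positive even weight `k` for `SL₂(ℤ)`, the integral
`Λ_f(s) = ∫_0^∞ f(iy) y^{s+(k-1)/2-1} dy` converges for every `s ∈ ℂ` and satisfies
the functional equation `Λ_f(s) = (-1)^{k/2} Λ_f(1-s)`. -/
theorem cuspForm_functional_equation (k : ℕ) (hk : 0 < k) (hke : Even k)
    (f : CuspForm (⊤ : Subgroup (Matrix.SpecialLinearGroup (Fin 2) ℤ)) (k : ℤ)) :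
    (∀ s : ℂ, IntegrableOn
      (fun y : ℝ => atI ⇑f y * (y : ℂ) ^ (s + ((k : ℂ) - 1) / 2 - 1)) (Ioi (0 : ℝ))) ∧
    ∀ s : ℂ, (∫ y in Ioi (0 : ℝ), atI ⇑f y * (y : ℂ) ^ (s + ((k : ℂ) - 1) / 2 - 1)) =
      (-1 : ℂ) ^ (k / 2) *
        ∫ y in Ioi (0 : ℝ), atI ⇑f y * (y : ℂ) ^ ((1 - s) + ((k : ℂ) - 1) / 2 - 1) := by
  have hmel0 : ∀ w : ℂ,
      (∫ y in Ioi (0:ℝ), atI ⇑f y * (y : ℂ) ^ (w - 1)) = mellin (atI ⇑f) w := by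
    intro w
    rw [mellin]
    refine setIntegral_congr_fun measurableSet_Ioi (fun y hy => ?_)
    simp [smul_eq_mul, mul_comm]
  have hfe : ∀ w : ℂ,
      mellin (atI ⇑f) (-w) = (-1 : ℂ) ^ (k / 2) * mellin (atI ⇑f) (w + k) := by
    intro w
    rw [← mellin_comp_inv (atI ⇑f) w, mellin, mellin, ← MeasureTheory.integral_const_mul]
    refine setIntegral_congr_fun measurableSet_Ioi (fun y hy => ?_)
    have hy0 : (0:ℝ) < y := hy
    have hyc : (y:ℂ) ≠ 0 := Complex.ofReal_ne_zero.mpr (ne_of_gt hy0)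
    rw [atI_inv k hke f hy0]
    simp only [smul_eq_mul]
    rw [show (w + (k:ℂ) - 1) = (w - 1) + k by ring, Complex.cpow_add _ _ hyc,
      Complex.cpow_natCast]
    ring
  constructor
  · intro s
    have h := atI_mellinConvergent k hke f (s + ((k:ℂ) - 1) / 2)
    exact h.congr_fun (fun y hy => by simp [smul_eq_mul, mul_comm]) measurableSet_Ioi
  · intro s
    rw [hmel0 (s + ((k:ℂ) - 1) / 2), hmel0 ((1 - s) + ((k:ℂ) - 1) / 2),
      show s + ((k:ℂ) - 1) / 2 = -(-(s + ((k:ℂ) - 1) / 2)) by ring, hfe,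
      show -(s + ((k:ℂ) - 1) / 2) + (k:ℂ) = (1 - s) + ((k:ℂ) - 1) / 2 by ring]
end
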